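/- Let N_tx, N_rx, Q, N_Σ, L be natural numbers with N_rx ≥ 1, N_Σ = L · N_rx, L ≤ Q ≤ N_tx, and N_tx + N_rx − 1 ≤ N_Σ. Then there exist finite sets D_tx and D_rx of natural numbers with |D_tx| = N_tx, |D_rx| = N_rx, and D_tx + D_rx = U_{N_Σ}, such that the number of subsets S of D_tx with |S| = Q and S + D_rx = U_{N_Σ} is at least the binomial coefficient C(N_tx − L, Q − L). -/
import Mathlib


open Finset Pointwise

theorem stmt_11 (Ntx Nrx Q Nsum L : ℕ) (hrx : 1 ≤ Nrx) (hNsum : Nsum = L * Nrx)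
    (hLQ : L ≤ Q) (hQN : Q ≤ Ntx) (hlb : Ntx + Nrx - 1 ≤ Nsum) :
    ∃ Dtx Drx : Finset ℕ, Dtx.card = Ntx ∧ Drx.card = Nrx ∧
      Dtx + Drx = Finset.range Nsum ∧
      (Ntx - L).choose (Q - L) ≤
        ((Dtx.powersetCard Q).filter (fun S => S + Drx = Finset.range Nsum)).card := by
  classical
  set R := Nsum + 1 - Nrx with hR
  set A : Finset ℕ := (range L).image (· * Nrx) with hA
  have hAcard : A.card = L := by
    rw [hA, card_image_of_injective _ (fun a b h => Nat.eq_of_mul_eq_mul_right hrx h),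
      card_range]
  have hAsub : A ⊆ range R := by
    intro x hx
    simp only [hA, mem_image, mem_range] at hx
    obtain ⟨k, hk, rfl⟩ := hx
    have h2 : (k + 1) * Nrx ≤ L * Nrx := Nat.mul_le_mul_right _ hk
    rw [Nat.add_one_mul] at h2
    simp only [mem_range]
    omega
  -- key sumset identity
  have hsum : A + range Nrx = range Nsum := by
    ext n
    simp only [Finset.mem_add, hA, mem_image, mem_range]
    constructor
    · rintro ⟨b, ⟨k, hk, rfl⟩, c, hc, rfl⟩
      have h2 : (k + 1) * Nrx ≤ L * Nrx := Nat.mul_le_mul_right _ hk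
      rw [Nat.add_one_mul] at h2
      omega
    · intro hn
      refine ⟨Nrx * (n / Nrx), ⟨n / Nrx, ?_, mul_comm _ _⟩, n % Nrx,
        Nat.mod_lt _ hrx, Nat.div_add_mod n Nrx⟩
      rw [Nat.div_lt_iff_lt_mul hrx]
      omega
  have hNtxR : Ntx ≤ R := by omega
  have hcompl : Ntx - L ≤ (range R \ A).card := by
    have h1 := Finset.le_card_sdiff A (range R)
    rw [card_range, hAcard] at h1
    omega
  obtain ⟨B, hBsub, hBcard⟩ := Finset.exists_subset_card_eq hcompl
  have hdisj : Disjoint A B :=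
    (Finset.sdiff_disjoint.mono_left hBsub).symm
  refine ⟨A ∪ B, range Nrx, ?_, card_range Nrx, ?_, ?_⟩
  · rw [card_union_of_disjoint hdisj, hAcard, hBcard]
    omega
  · apply Finset.Subset.antisymm
    · intro n hn
      rw [Finset.mem_add] at hn
      obtain ⟨b, hb, c, hc, rfl⟩ := hn
      have hbR : b ∈ range R := by
        rcases Finset.mem_union.mp hb with h | h
        · exact hAsub h
        · exact (Finset.mem_sdiff.mp (hBsub h)).1
      simp only [mem_range] at hbR hc ⊢
      omega
    · intro n hn
      rw [← hsum, Finset.mem_add] at hn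
      obtain ⟨b, hb, c, hc, rfl⟩ := hn
      exact Finset.mem_add.mpr ⟨b, Finset.mem_union_left _ hb, c, hc, rfl⟩
  · have hsub_sum : ∀ S : Finset ℕ, A ⊆ S → S ⊆ A ∪ B →
        S + range Nrx = range Nsum := by
      intro S hAS hSD
      apply Finset.Subset.antisymm
      · intro n hn
        rw [Finset.mem_add] at hn
        obtain ⟨b, hb, c, hc, rfl⟩ := hn
        have hbR : b ∈ range R := by
          rcases Finset.mem_union.mp (hSD hb) with h | h
          · exact hAsub h
          · exact (Finset.mem_sdiff.mp (hBsub h)).1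
        simp only [mem_range] at hbR hc ⊢
        omega
      · intro n hn
        rw [← hsum, Finset.mem_add] at hn
        obtain ⟨b, hb, c, hc, rfl⟩ := hn
        exact Finset.mem_add.mpr ⟨b, hAS hb, c, hc, rfl⟩
    have key : ∀ T ∈ B.powersetCard (Q - L),
        A ∪ T ∈ ((A ∪ B).powersetCard Q).filter
          (fun S => S + range Nrx = Finset.range Nsum) := by
      intro T hT
      rw [Finset.mem_powersetCard] at hT
      obtain ⟨hTB, hTcard⟩ := hT
      have hdT : Disjoint A T := hdisj.mono_right hTB
      rw [Finset.mem_filter, Finset.mem_powersetCard]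
      refine ⟨⟨Finset.union_subset_union_right hTB, ?_⟩, ?_⟩
      · rw [card_union_of_disjoint hdT, hAcard, hTcard]; omega
      · exact hsub_sum _ Finset.subset_union_left
          (Finset.union_subset_union_right hTB)
    have hinj : Set.InjOn (fun T => A ∪ T) (B.powersetCard (Q - L)) := by
      intro T1 h1 T2 h2 h
      rw [Finset.mem_coe, Finset.mem_powersetCard] at h1 h2
      have e1 : (A ∪ T1) \ A = T1 :=
        Finset.union_sdiff_cancel_left (hdisj.mono_right h1.1)
      have e2 : (A ∪ T2) \ A = T2 :=
        Finset.union_sdiff_cancel_left (hdisj.mono_right h2.1)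
      rw [← e1, ← e2]
      simp only at h
      rw [h]
    calc (Ntx - L).choose (Q - L) = (B.powersetCard (Q - L)).card := by
          rw [Finset.card_powersetCard, hBcard]
      _ ≤ _ := Finset.card_le_card_of_injOn _ key hinj
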